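/- Let ρ, c, k, ℓ, γ, D∞ be positive reals, α = k/(ρc), 0 < ε < 1, and suppose h₀ > (1/D∞)√(γ(1-ε)ρℓk/2). Let ξ > 0 be the unique solution of (D∞c/(ℓ√π))·exp(-x²)/(k/(h₀√(πα)) + erf(x)) = x + (γ(1-ε)√π/(2D∞))·(k/(h₀√(πα)) + erf(x))·exp(x²), and set D₀ = D∞·erf(ξ)/(k/(h₀√(πα)) + erf(ξ)). Then 0 < D₀ < D∞, and ξ is the unique positive solution of the equation G₂(x) = D₀c/(ℓ√π), where F∞(x) = exp(-x²)/erf(x), G₀(x) = x + (γ(1-ε)√π/(2D₀))·(1/F∞(x)), and G₂(x) = G₀(x)/F∞(x). -/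

import Mathlib

open Real Filter Set Topology

/-- The error function `erf x = (2/√π) ∫₀ˣ exp(-t²) dt`. -/
noncomputable def erf (x : ℝ) : ℝ := (2 / Real.sqrt π) * ∫ t in (0:ℝ)..x, Real.exp (-t ^ 2)

lemma erf_strict {a b : ℝ} (hab : a < b) : erf a < erf b := by
  have hint : ∀ u v : ℝ, IntervalIntegrable (fun t => Real.exp (-t ^ 2)) MeasureTheory.volume u v :=
    fun u v => Continuous.intervalIntegrable (by continuity) u v
  have hpos : 0 < ∫ t in a..b, Real.exp (-t ^ 2) :=
    intervalIntegral.intervalIntegral_pos_of_pos (hint a b) (fun x => Real.exp_pos _) hab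
  have hsplit : (∫ t in (0:ℝ)..a, Real.exp (-t ^ 2)) + ∫ t in a..b, Real.exp (-t ^ 2)
      = ∫ t in (0:ℝ)..b, Real.exp (-t ^ 2) :=
    intervalIntegral.integral_add_adjacent_intervals (hint 0 a) (hint a b)
  have hc : 0 < 2 / Real.sqrt π := by positivity
  unfold erf
  nlinarith [hc, hpos, hsplit]

lemma erf_zero' : erf 0 = 0 := by simp [erf]

lemma erf_pos {x : ℝ} (hx : 0 < x) : 0 < erf x := by
  have := erf_strict hx
  rwa [erf_zero'] at this

/-- Equivalence of the convective problem with the temperature problem: with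
`D₀ = D∞ erf ξ/(k/(h₀√(πα)) + erf ξ)` one has `0 < D₀ < D∞`, and `ξ` is the unique
positive solution of the temperature-problem equation `G₂(x) = D₀ c/(ℓ√π)`. -/
theorem stmt_13 (ρ c k ℓ γ Dinf h₀ α ε ξ D₀ : ℝ)
    (hρ : 0 < ρ) (hc : 0 < c) (hk : 0 < k) (hℓ : 0 < ℓ) (hγ : 0 < γ) (hD : 0 < Dinf)
    (hα : α = k / (ρ * c)) (hε0 : 0 < ε) (hε1 : ε < 1)
    (hh : h₀ > (1 / Dinf) * Real.sqrt (γ * (1 - ε) * ρ * ℓ * k / 2))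
    (hξpos : 0 < ξ)
    (hξeq : (Dinf * c / (ℓ * Real.sqrt π)) * Real.exp (-ξ ^ 2) /
        (k / (h₀ * Real.sqrt (π * α)) + erf ξ) =
      ξ + (γ * (1 - ε) * Real.sqrt π / (2 * Dinf)) *
        (k / (h₀ * Real.sqrt (π * α)) + erf ξ) * Real.exp (ξ ^ 2))
    (hξuniq : ∀ y > (0:ℝ),
      (Dinf * c / (ℓ * Real.sqrt π)) * Real.exp (-y ^ 2) /
          (k / (h₀ * Real.sqrt (π * α)) + erf y) =
        y + (γ * (1 - ε) * Real.sqrt π / (2 * Dinf)) *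
          (k / (h₀ * Real.sqrt (π * α)) + erf y) * Real.exp (y ^ 2) → y = ξ)
    (hD₀ : D₀ = Dinf * erf ξ / (k / (h₀ * Real.sqrt (π * α)) + erf ξ))
    (Finf G₀ G₂ : ℝ → ℝ)
    (hFinf : ∀ x, Finf x = Real.exp (-x ^ 2) / erf x)
    (hG₀ : ∀ x, G₀ x = x + (γ * (1 - ε) * Real.sqrt π / (2 * D₀)) * (1 / Finf x))
    (hG₂ : ∀ x, G₂ x = G₀ x / Finf x) :
    0 < D₀ ∧ D₀ < Dinf ∧
    (G₂ ξ = D₀ * c / (ℓ * Real.sqrt π)) ∧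
    (∀ y > (0:ℝ), G₂ y = D₀ * c / (ℓ * Real.sqrt π) → y = ξ) := by
  have hπ : 0 < Real.sqrt π := by positivity
  have h1ε : 0 < 1 - ε := by linarith
  have harg : 0 < γ * (1 - ε) * ρ * ℓ * k / 2 := by positivity
  have hh₀ : 0 < h₀ := lt_trans (by positivity) hh
  have hαpos : 0 < α := by rw [hα]; positivity
  have hβ : 0 < k / (h₀ * Real.sqrt (π * α)) := by positivity
  set β := k / (h₀ * Real.sqrt (π * α)) with hβdef
  clear_value β
  clear hβdef hξuniq hh hα
  have herfξ : 0 < erf ξ := erf_pos hξpos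
  have hS : 0 < β + erf ξ := by linarith
  have hD₀pos : 0 < D₀ := by rw [hD₀]; positivity
  have hD₀lt : D₀ < Dinf := by
    rw [hD₀, div_lt_iff₀ hS]; nlinarith
  have hCst : 0 < γ * (1 - ε) * Real.sqrt π / (2 * D₀) := by positivity
  have hG₂' : ∀ y, 0 < y → G₂ y =
      (y + (γ * (1 - ε) * Real.sqrt π / (2 * D₀)) * (erf y * Real.exp (y ^ 2))) *
        (erf y * Real.exp (y ^ 2)) := by
    intro y hy
    have he : (erf y) ≠ 0 := (erf_pos hy).ne'
    have hexp : Real.exp (y ^ 2) ≠ 0 := (Real.exp_pos _).ne'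
    rw [hG₂, hG₀, hFinf, Real.exp_neg]
    field_simp
  have hDS : D₀ * (β + erf ξ) = Dinf * erf ξ := by
    rw [hD₀]; field_simp
  have hcoef : (γ * (1 - ε) * Real.sqrt π / (2 * D₀)) * (erf ξ * Real.exp (ξ ^ 2)) =
      γ * (1 - ε) * Real.sqrt π / (2 * Dinf) * (β + erf ξ) * Real.exp (ξ ^ 2) := by
    field_simp
    linear_combination -hDS
  have heq : G₂ ξ = D₀ * c / (ℓ * Real.sqrt π) := by
    rw [hG₂' ξ hξpos]
    rw [show ξ + γ * (1 - ε) * Real.sqrt π / (2 * D₀) * (erf ξ * Real.exp (ξ ^ 2)) =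
        (Dinf * c / (ℓ * Real.sqrt π)) * Real.exp (-ξ ^ 2) / (β + erf ξ) from by
      rw [hcoef]; exact hξeq.symm]
    rw [Real.exp_neg]
    have hexp : Real.exp (ξ ^ 2) ≠ 0 := (Real.exp_pos _).ne'
    field_simp
    linear_combination -hDS
  refine ⟨hD₀pos, hD₀lt, heq, ?_⟩
  intro y hy hGy
  have mono : ∀ a b : ℝ, 0 < a → a < b → G₂ a < G₂ b := by
    intro a b ha hab
    have hb : 0 < b := ha.trans hab
    have hea : 0 < erf a := erf_pos ha
    have hE : erf a * Real.exp (a ^ 2) < erf b * Real.exp (b ^ 2) := by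
      have h2 : Real.exp (a ^ 2) < Real.exp (b ^ 2) := by
        apply Real.exp_lt_exp.mpr; nlinarith
      exact mul_lt_mul'' (erf_strict hab) h2 hea.le (Real.exp_pos _).le
    have hEa : 0 < erf a * Real.exp (a ^ 2) := by positivity
    rw [hG₂' a ha, hG₂' b hb]
    have h1 : a + (γ * (1 - ε) * Real.sqrt π / (2 * D₀)) * (erf a * Real.exp (a ^ 2)) <
        b + (γ * (1 - ε) * Real.sqrt π / (2 * D₀)) * (erf b * Real.exp (b ^ 2)) :=
      add_lt_add hab (mul_lt_mul_of_pos_left hE hCst)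
    exact mul_lt_mul'' h1 hE (by positivity) hEa.le
  rcases lt_trichotomy y ξ with h | h | h
  · exact absurd (hGy.trans heq.symm) (mono y ξ hy h).ne
  · exact h
  · exact absurd (hGy.trans heq.symm) (mono ξ y hξpos h).ne'
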